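/- The polynomial x + x²y + z³ + t² is irreducible in ℂ[x,y,z,t]. -/

import Mathlib

open MvPolynomial

lemma irr_linear {R : Type*} [CommRing R] [IsDomain R] {a b : R} (ha : a ≠ 0)
    (h : ∀ c : R, c ∣ a → c ∣ b → IsUnit c) :
    Irreducible (Polynomial.C a * Polynomial.X + Polynomial.C b) := by
  set q : Polynomial R := Polynomial.C a * Polynomial.X + Polynomial.C b with hq
  have hdeg : q.natDegree = 1 := Polynomial.natDegree_linear ha
  have hq0 : q ≠ 0 := fun h0 => by simp [h0] at hdeg
  have hc1 : q.coeff 1 = a := by simp [hq]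
  have hc0 : q.coeff 0 = b := by simp [hq]
  refine ⟨fun hu => ?_, fun f g hfg => ?_⟩
  · have := Polynomial.natDegree_eq_zero_of_isUnit hu
    omega
  · have hf0 : f ≠ 0 := fun h0 => hq0 (by simp [hfg, h0])
    have hg0 : g ≠ 0 := fun h0 => hq0 (by simp [hfg, h0])
    have hsum : f.natDegree + g.natDegree = 1 := by
      rw [← Polynomial.natDegree_mul hf0 hg0, ← hfg, hdeg]
    rcases Nat.eq_zero_or_pos f.natDegree with hf | hf
    · left
      have hfc : f = Polynomial.C (f.coeff 0) := Polynomial.eq_C_of_natDegree_eq_zero hf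
      have hda : f.coeff 0 ∣ a := by
        refine ⟨g.coeff 1, ?_⟩
        rw [← hc1, hfg, hfc, Polynomial.coeff_C_mul]; simp
      have hdb : f.coeff 0 ∣ b := by
        refine ⟨g.coeff 0, ?_⟩
        rw [← hc0, hfg, hfc, Polynomial.coeff_C_mul]; simp
      rw [hfc]
      exact (Polynomial.isUnit_C).mpr (h _ hda hdb)
    · right
      have hg : g.natDegree = 0 := by omega
      have hgc : g = Polynomial.C (g.coeff 0) := Polynomial.eq_C_of_natDegree_eq_zero hg
      have hda : g.coeff 0 ∣ a := by
        refine ⟨f.coeff 1, ?_⟩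
        rw [← hc1, hfg, hgc, mul_comm, Polynomial.coeff_C_mul]; simp
      have hdb : g.coeff 0 ∣ b := by
        refine ⟨f.coeff 0, ?_⟩
        rw [← hc0, hfg, hgc, mul_comm, Polynomial.coeff_C_mul]; simp
      rw [hgc]
      exact (Polynomial.isUnit_C).mpr (h _ hda hdb)

lemma not_X0_dvd_b :
    ¬ (X 0 : MvPolynomial (Fin 3) ℂ) ∣ (X 0 + X 1 ^ 3 + X 2 ^ 2) := by
  intro hd
  have hd2 : (X 0 : MvPolynomial (Fin 3) ℂ) ∣ (X 1 ^ 3 + X 2 ^ 2) := by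
    have := dvd_sub hd (dvd_refl (X 0 : MvPolynomial (Fin 3) ℂ))
    simpa [add_sub_cancel_left, add_comm, add_assoc, add_sub_cancel] using this
  obtain ⟨d, hdd⟩ := hd2
  have := congrArg (eval (fun j : Fin 3 => if j = 1 then (1 : ℂ) else 0)) hdd
  simp at this

/-- The Russell cubic polynomial `x + x²y + z³ + t²` is irreducible in `ℂ[x,y,z,t]`. -/
theorem russellCubic_irreducible :
    Irreducible ((X 0 + X 0 ^ 2 * X 1 + X 2 ^ 3 + X 3 ^ 2 : MvPolynomial (Fin 4) ℂ)) := by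
  let e : MvPolynomial (Fin 4) ℂ ≃ₐ[ℂ] Polynomial (MvPolynomial (Fin 3) ℂ) :=
    (renameEquiv ℂ (Equiv.swap 0 1)).trans (finSuccEquiv ℂ 3)
  rw [← MulEquiv.irreducible_iff e.toMulEquiv]
  have he : e.toMulEquiv (X 0 + X 0 ^ 2 * X 1 + X 2 ^ 3 + X 3 ^ 2 : MvPolynomial (Fin 4) ℂ)
      = Polynomial.C ((X 0 : MvPolynomial (Fin 3) ℂ) ^ 2) * Polynomial.X
        + Polynomial.C (X 0 + X 1 ^ 3 + X 2 ^ 2) := by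
    show e _ = _
    simp only [e, AlgEquiv.trans_apply, renameEquiv_apply, map_add, map_mul, map_pow, rename_X]
    have h01 : Equiv.swap (0 : Fin 4) 1 0 = 1 := Equiv.swap_apply_left 0 1
    have h10 : Equiv.swap (0 : Fin 4) 1 1 = 0 := Equiv.swap_apply_right 0 1
    have h2 : Equiv.swap (0 : Fin 4) 1 2 = 2 := Equiv.swap_apply_of_ne_of_ne (by decide) (by decide)
    have h3 : Equiv.swap (0 : Fin 4) 1 3 = 3 := Equiv.swap_apply_of_ne_of_ne (by decide) (by decide)
    rw [h01, h10, h2, h3]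
    have e0 : finSuccEquiv ℂ 3 (X 0) = Polynomial.X := finSuccEquiv_X_zero
    have e1 : finSuccEquiv ℂ 3 (X 1) = Polynomial.C (X 0) := finSuccEquiv_X_succ (j := 0)
    have e2 : finSuccEquiv ℂ 3 (X 2) = Polynomial.C (X 1) := finSuccEquiv_X_succ (j := 1)
    have e3 : finSuccEquiv ℂ 3 (X 3) = Polynomial.C (X 2) := finSuccEquiv_X_succ (j := 2)
    rw [e0, e1, e2, e3]
    ring_nf
  rw [he]
  apply irr_linear (pow_ne_zero 2 (X_ne_zero 0))
  intro c hca hcb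
  have hp : Prime (X 0 : MvPolynomial (Fin 3) ℂ) := by
    rw [← MulEquiv.prime_iff (finSuccEquiv ℂ 2).toMulEquiv]
    have : (finSuccEquiv ℂ 2).toMulEquiv (X 0) = Polynomial.X := finSuccEquiv_X_zero
    rw [this]
    exact Polynomial.prime_X
  obtain ⟨i, hi, hassoc⟩ := (dvd_prime_pow hp 2).mp hca
  rcases Nat.eq_zero_or_pos i with h0 | h1
  · rw [h0, pow_zero] at hassoc
    exact associated_one_iff_isUnit.mp hassoc
  · exfalso
    have hx0c : (X 0 : MvPolynomial (Fin 3) ℂ) ∣ c := by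
      have : (X 0 : MvPolynomial (Fin 3) ℂ) ∣ (X 0) ^ i := dvd_pow_self _ (by omega)
      exact this.trans hassoc.symm.dvd
    exact not_X0_dvd_b (hx0c.trans hcb)
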